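/- For every linear ordering α and every natural number k ≥ 1, there exists a map c : α → {0,…,k−1} such that for all x < y in α with c(x) = c(y), the image c([x,y]) equals all of {0,…,k−1}. -/

import Mathlib

open Set
open Fin.CommRing

theorem Set.Finite.exists_minimal_wrt {α β : Type*} [PartialOrder β] (f : α → β) (s : Set α)
    (h : s.Finite) (hs : s.Nonempty) : ∃ a ∈ s, ∀ a' ∈ s, f a' ≤ f a → f a = f a' := by
  obtain ⟨a, ha, hmin⟩ := h.exists_minimalFor f s hs
  exact ⟨a, ha, fun a' ha' hle => le_antisymm (hmin ha' hle) hle⟩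

theorem Set.Finite.exists_maximal_wrt {α β : Type*} [PartialOrder β] (f : α → β) (s : Set α)
    (h : s.Finite) (hs : s.Nonempty) : ∃ a ∈ s, ∀ a' ∈ s, f a ≤ f a' → f a = f a' := by
  obtain ⟨a, ha, hmax⟩ := h.exists_maximalFor f s hs
  exact ⟨a, ha, fun a' ha' hle => le_antisymm hle (hmax ha' hle)⟩

namespace RainbowCol

variable {α : Type*} [LinearOrder α]

/-- same finite-interval block -/
def fb (x y : α) : Prop := (Set.uIcc x y).Finite

lemma fb_refl (x : α) : fb x x := by simp [fb]

lemma fb_symm {x y : α} (h : fb x y) : fb y x := by rwa [fb, Set.uIcc_comm]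

lemma fb_trans {x y z : α} (h1 : fb x y) (h2 : fb y z) : fb x z :=
  Set.Finite.subset (h1.union h2) Set.uIcc_subset_uIcc_union_uIcc

lemma fb_Icc {x y : α} (h : fb x y) (hxy : x ≤ y) : (Set.Icc x y).Finite := by
  rwa [fb, Set.uIcc_of_le hxy] at h

lemma fb_of_Icc {x y : α} (hxy : x ≤ y) (h : (Set.Icc x y).Finite) : fb x y := by
  rwa [fb, Set.uIcc_of_le hxy]

lemma fb_of_mem_Icc {x y z : α} (h : fb x y) (hxy : x ≤ y) (hz : z ∈ Set.Icc x y) : fb x z :=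
  fb_of_Icc hz.1 ((fb_Icc h hxy).subset (Set.Icc_subset_Icc_right hz.2))

lemma not_fb_infinite {x y : α} (hxy : x ≤ y) (h : ¬ fb x y) : (Set.Icc x y).Infinite := by
  rw [fb, Set.uIcc_of_le hxy] at h; exact h

def fbSetoid (α : Type*) [LinearOrder α] : Setoid α :=
  ⟨fb, ⟨fb_refl, fb_symm, fb_trans⟩⟩

noncomputable def rep (x : α) : α := (Quotient.mk (fbSetoid α) x).out

lemma rep_fb (x : α) : fb (rep x) x := Quotient.mk_out (s := fbSetoid α) x

lemma rep_congr {x y : α} (h : fb x y) : rep x = rep y := by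
  unfold rep
  congr 1
  exact Quotient.sound (s := fbSetoid α) h

lemma rep_idem (x : α) : rep (rep x) = rep x := rep_congr (rep_fb x)

/-- the block of x -/
def blk (x : α) : Set α := {w | fb x w}

lemma self_mem_blk (x : α) : x ∈ blk x := fb_refl x

lemma rep_mem_blk (x : α) : rep x ∈ blk x := fb_symm (rep_fb x)

lemma blk_eq_of_fb {x y : α} (h : fb x y) : blk x = blk y := by
  ext w; exact ⟨fun hw => fb_trans (fb_symm h) hw, fun hw => fb_trans h hw⟩

/-- signed distance within a block -/
noncomputable def d (x y : α) : ℤ :=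
  if x ≤ y then ((Set.Icc x y).ncard : ℤ) - 1 else -(((Set.Icc y x).ncard : ℤ) - 1)

lemma d_self (x : α) : d x x = 0 := by simp [d]

lemma Icc_card_add {a b c : α} (hab : a ≤ b) (hbc : b ≤ c) (h : (Set.Icc a c).Finite) :
    ((Set.Icc a c).ncard : ℤ) - 1 =
      (((Set.Icc a b).ncard : ℤ) - 1) + (((Set.Icc b c).ncard : ℤ) - 1) := by
  have hu : Set.Icc a b ∪ Set.Icc b c = Set.Icc a c := Set.Icc_union_Icc_eq_Icc hab hbc
  have hi : Set.Icc a b ∩ Set.Icc b c = {b} := by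
    apply Set.Subset.antisymm
    · rintro z ⟨⟨_, h1⟩, ⟨h2, _⟩⟩
      exact le_antisymm h1 h2
    · rintro z rfl
      exact ⟨⟨hab, le_refl _⟩, ⟨le_refl _, hbc⟩⟩
  have h1 : (Set.Icc a b).Finite := h.subset (Set.Icc_subset_Icc_right hbc)
  have h2 : (Set.Icc b c).Finite := h.subset (Set.Icc_subset_Icc_left hab)
  have key := Set.ncard_union_add_ncard_inter (Set.Icc a b) (Set.Icc b c) h1 h2
  rw [hu, hi, Set.ncard_singleton] at key
  have : (Set.Icc a c).ncard + 1 = (Set.Icc a b).ncard + (Set.Icc b c).ncard := key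
  omega

lemma d_shift {r u v : α} (hru : fb r u) (huv : fb u v) (h : u ≤ v) :
    d r v = d r u + (((Set.Icc u v).ncard : ℤ) - 1) := by
  have hrv : fb r v := fb_trans hru huv
  rcases le_or_gt r u with h1 | h1
  · -- r ≤ u ≤ v
    have h2 : r ≤ v := le_trans h1 h
    rw [d, if_pos h2, d, if_pos h1]
    have := Icc_card_add h1 h (fb_Icc hrv h2)
    omega
  · have hur : u ≤ r := le_of_lt h1
    rcases le_or_gt r v with h2 | h2
    · -- u ≤ r ≤ v
      rw [d, if_pos h2, d, if_neg (not_le_of_gt h1)]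
      have := Icc_card_add hur h2 (fb_Icc huv h)
      omega
    · -- u ≤ v ≤ r
      have hvr : v ≤ r := le_of_lt h2
      rw [d, if_neg (not_le_of_gt h2), d, if_neg (not_le_of_gt h1)]
      have := Icc_card_add h hvr (fb_Icc (fb_symm hru) hur)
      omega

variable (n : ℕ)

/-- the colouring determined by an offset function -/
noncomputable def col (Off : α → ℤ) (z : α) : Fin (n + 1) :=
  ((Off (rep z) + d (rep z) z : ℤ) : Fin (n + 1))

lemma col_shift (Off : α → ℤ) {u v : α} (huv : fb u v) (h : u ≤ v) :
    col n Off v = col n Off u + ((((Set.Icc u v).ncard - 1 : ℕ)) : Fin (n + 1)) := by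
  have hrep : rep u = rep v := rep_congr huv
  have hd : d (rep u) v = d (rep u) u + (((Set.Icc u v).ncard : ℤ) - 1) :=
    d_shift (fb_symm (rep_mem_blk u)) huv h
  have hpos : 0 < (Set.Icc u v).ncard := by
    rw [Set.ncard_pos (fb_Icc huv h)]
    exact ⟨u, le_refl u, h⟩
  have hcast : ((((Set.Icc u v).ncard - 1 : ℕ)) : ℤ) = ((Set.Icc u v).ncard : ℤ) - 1 := by
    omega
  rw [col, col, ← hrep, hd]
  push_cast
  rw [Nat.cast_sub hpos]
  push_cast
  ring

lemma col_fixed (Off : α → ℤ) {z : α} (hz : rep z = z) (i : Fin (n + 1))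
    (hOff : Off z = (i : ℕ)) : col n Off z = i := by
  rw [col, hz, d_self, hOff]
  push_cast
  simp

/-- enumeration upward: every intermediate cardinality is attained -/
lemma W_up {x y : α} (hxy : x ≤ y) (hf : (Set.Icc x y).Finite) :
    ∀ j, j < (Set.Icc x y).ncard → ∃ w ∈ Set.Icc x y, (Set.Icc x w).ncard = j + 1 := by
  intro j
  induction j with
  | zero =>
    intro _
    exact ⟨x, ⟨le_refl x, hxy⟩, by simp⟩
  | succ j ih =>
    intro hj
    obtain ⟨w, hw, hcard⟩ := ih (lt_of_le_of_lt (Nat.le_succ j) hj)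
    have hwy : w < y := by
      rcases lt_or_eq_of_le hw.2 with h | h
      · exact h
      · exfalso; rw [h] at hcard; omega
    have hne : (Set.Ioc w y).Nonempty := ⟨y, hwy, le_refl y⟩
    have hfin : (Set.Ioc w y).Finite :=
      hf.subset (fun z hz => ⟨le_trans hw.1 (le_of_lt hz.1), hz.2⟩)
    obtain ⟨w', hw'mem, hw'min⟩ := hfin.exists_minimal_wrt id _ hne
    have hxw' : x ≤ w' := le_trans hw.1 (le_of_lt hw'mem.1)
    have hIcc : Set.Icc x w' = insert w' (Set.Icc x w) := by
      apply Set.Subset.antisymm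
      · rintro z ⟨hz1, hz2⟩
        rcases le_or_gt z w with h | h
        · exact Set.mem_insert_of_mem _ ⟨hz1, h⟩
        · have hmem : z ∈ Set.Ioc w y := ⟨h, le_trans hz2 hw'mem.2⟩
          have : w' = z := hw'min z hmem hz2
          rw [← this]
          exact Set.mem_insert _ _
      · rintro z hz
        rcases hz with rfl | hz
        · exact ⟨hxw', le_refl _⟩
        · exact ⟨hz.1, le_trans hz.2 (le_of_lt hw'mem.1)⟩
    have hnotmem : w' ∉ Set.Icc x w := fun hc => absurd hc.2 (not_le_of_gt hw'mem.1)
    refine ⟨w', ⟨hxw', hw'mem.2⟩, ?_⟩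
    rw [hIcc, Set.ncard_insert_of_notMem hnotmem (hf.subset (Set.Icc_subset_Icc_right hw.2)), hcard]


/-- enumeration downward -/
lemma W_down {x y : α} (hxy : x ≤ y) (hf : (Set.Icc x y).Finite) :
    ∀ j, j < (Set.Icc x y).ncard → ∃ w ∈ Set.Icc x y, (Set.Icc w y).ncard = j + 1 := by
  intro j
  induction j with
  | zero =>
    intro _
    exact ⟨y, ⟨hxy, le_refl y⟩, by simp⟩
  | succ j ih =>
    intro hj
    obtain ⟨w, hw, hcard⟩ := ih (lt_of_le_of_lt (Nat.le_succ j) hj)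
    have hxw : x < w := by
      rcases lt_or_eq_of_le hw.1 with h | h
      · exact h
      · exfalso; rw [← h] at hcard; omega
    have hne : (Set.Ico x w).Nonempty := ⟨x, le_refl x, hxw⟩
    have hfin : (Set.Ico x w).Finite :=
      hf.subset (fun z hz => ⟨hz.1, le_trans (le_of_lt hz.2) hw.2⟩)
    obtain ⟨w', hw'mem, hw'max⟩ := hfin.exists_maximal_wrt id _ hne
    have hw'y : w' ≤ y := le_trans (le_of_lt hw'mem.2) hw.2
    have hIcc : Set.Icc w' y = insert w' (Set.Icc w y) := by
      apply Set.Subset.antisymm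
      · rintro z ⟨hz1, hz2⟩
        rcases le_or_gt w z with h | h
        · exact Set.mem_insert_of_mem _ ⟨h, hz2⟩
        · have hmem : z ∈ Set.Ico x w := ⟨le_trans hw'mem.1 hz1, h⟩
          have : w' = z := hw'max z hmem hz1
          rw [← this]
          exact Set.mem_insert _ _
      · rintro z hz
        rcases hz with rfl | hz
        · exact ⟨le_refl _, hw'y⟩
        · exact ⟨le_trans (le_of_lt hw'mem.2) hz.1, hz.2⟩
    have hnotmem : w' ∉ Set.Icc w y := fun hc => absurd hc.1 (not_le_of_gt hw'mem.2)
    refine ⟨w', ⟨hw'mem.1, hw'y⟩, ?_⟩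
    rw [hIcc, Set.ncard_insert_of_notMem hnotmem (hf.subset (Set.Icc_subset_Icc_left hw.1)), hcard]

lemma colours_up (Off : α → ℤ) {x y : α} (h : fb x y) (hxy : x ≤ y) {j : ℕ}
    (hj : j < (Set.Icc x y).ncard) :
    ∃ w ∈ Set.Icc x y, col n Off w = col n Off x + (j : Fin (n + 1)) := by
  obtain ⟨w, hw, hcard⟩ := W_up hxy (fb_Icc h hxy) j hj
  refine ⟨w, hw, ?_⟩
  rw [col_shift n Off (fb_of_mem_Icc h hxy hw) hw.1, hcard]
  simp

lemma colours_down (Off : α → ℤ) {x y : α} (h : fb x y) (hxy : x ≤ y) {j : ℕ}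
    (hj : j < (Set.Icc x y).ncard) :
    ∃ w ∈ Set.Icc x y, col n Off w + (j : Fin (n + 1)) = col n Off y := by
  obtain ⟨w, hw, hcard⟩ := W_down hxy (fb_Icc h hxy) j hj
  refine ⟨w, hw, ?_⟩
  have hwb : fb w y := fb_of_Icc hw.2 ((fb_Icc h hxy).subset (Set.Icc_subset_Icc_left hw.1))
  rw [col_shift n Off hwb hw.2, hcard]
  simp

lemma case_same_block (Off : α → ℤ) {x y : α} (hxy : x < y) (h : fb x y)
    (hc : col n Off x = col n Off y) (i : Fin (n + 1)) :
    ∃ z ∈ Set.Icc x y, col n Off z = i := by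
  have hle := le_of_lt hxy
  have h2 : 2 ≤ (Set.Icc x y).ncard := by
    have hsub : ({x, y} : Set α) ⊆ Set.Icc x y := by
      rintro z (rfl | rfl)
      · exact ⟨le_refl _, hle⟩
      · exact ⟨hle, le_refl _⟩
    calc 2 = ({x, y} : Set α).ncard := (Set.ncard_pair (ne_of_lt hxy)).symm
    _ ≤ (Set.Icc x y).ncard := Set.ncard_le_ncard hsub (fb_Icc h hle)
  set N := (Set.Icc x y).ncard - 1 with hN
  have hcs := col_shift n Off h hle
  rw [← hc] at hcs
  have hNz : ((N : ℕ) : Fin (n + 1)) = 0 := by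
    have h' : col n Off x + ((N : ℕ) : Fin (n + 1)) = col n Off x + 0 := by
      rw [add_zero, ← hcs, hc]
    exact add_left_cancel h' 
  have hmod : N % (n + 1) = 0 := by
    have h0 : ((N : ℕ) : Fin (n + 1)).val = (0 : Fin (n + 1)).val := congrArg Fin.val hNz
    rw [Fin.val_natCast, Fin.val_zero] at h0
    exact h0
  have hNge : n + 1 ≤ N := by
    have hdvd := Nat.dvd_of_mod_eq_zero hmod
    exact Nat.le_of_dvd (by omega) hdvd
  set j := (i - col n Off x).val with hj
  have hjlt : j < (Set.Icc x y).ncard := by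
    have : j < n + 1 := (i - col n Off x).isLt
    omega
  obtain ⟨w, hw, hcw⟩ := colours_up n Off h hle hjlt
  refine ⟨w, hw, ?_⟩
  rw [hcw, hj, Fin.cast_val_eq_self]
  ring

lemma case_up_inf (Off : α → ℤ) {x : α} (h : {z | fb x z ∧ x ≤ z}.Infinite) (i : Fin (n + 1)) :
    ∃ z, x ≤ z ∧ fb x z ∧ col n Off z = i := by
  set j := (i - col n Off x).val with hj
  obtain ⟨t, hts, htc⟩ := h.exists_subset_card_eq (j + 1)
  have htne : t.Nonempty := Finset.card_pos.mp (by omega)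
  set z' := t.max' htne with hz'
  have hz'S : fb x z' ∧ x ≤ z' := hts (t.max'_mem htne)
  have hsub : (↑t : Set α) ⊆ Set.Icc x z' := by
    intro w hw
    exact ⟨(hts hw).2, Finset.le_max' t w hw⟩
  have hjlt : j < (Set.Icc x z').ncard := by
    have : (↑t : Set α).ncard ≤ (Set.Icc x z').ncard :=
      Set.ncard_le_ncard hsub (fb_Icc hz'S.1 hz'S.2)
    rw [Set.ncard_coe_finset, htc] at this
    omega
  obtain ⟨w, hw, hcw⟩ := colours_up n Off hz'S.1 hz'S.2 hjlt
  refine ⟨w, hw.1, fb_of_mem_Icc hz'S.1 hz'S.2 hw, ?_⟩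
  rw [hcw, hj, Fin.cast_val_eq_self]
  ring

lemma case_down_inf (Off : α → ℤ) {x : α} (h : {z | fb x z ∧ z ≤ x}.Infinite) (i : Fin (n + 1)) :
    ∃ z, z ≤ x ∧ fb x z ∧ col n Off z = i := by
  set j := (col n Off x - i).val with hj
  obtain ⟨t, hts, htc⟩ := h.exists_subset_card_eq (j + 1)
  have htne : t.Nonempty := Finset.card_pos.mp (by omega)
  set z' := t.min' htne with hz'
  have hz'S : fb x z' ∧ z' ≤ x := hts (t.min'_mem htne)
  have hfbzx : fb z' x := fb_symm hz'S.1
  have hsub : (↑t : Set α) ⊆ Set.Icc z' x := by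
    intro w hw
    exact ⟨Finset.min'_le t w hw, (hts hw).2⟩
  have hjlt : j < (Set.Icc z' x).ncard := by
    have : (↑t : Set α).ncard ≤ (Set.Icc z' x).ncard :=
      Set.ncard_le_ncard hsub (fb_Icc hfbzx hz'S.2)
    rw [Set.ncard_coe_finset, htc] at this
    omega
  obtain ⟨w, hw, hcw⟩ := colours_down n Off hfbzx hz'S.2 hjlt
  refine ⟨w, hw.2, fb_trans hz'S.1 (fb_of_mem_Icc hfbzx hz'S.2 hw), ?_⟩
  have : col n Off w = col n Off x - ((j : ℕ) : Fin (n+1)) := by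
    rw [← hcw]; ring
  rw [this, hj, Fin.cast_val_eq_self]
  ring

/-- a cell: a nonempty open interval which is a union of finite blocks -/
def cell (a b : α) : Prop :=
  (Set.Ioo a b).Nonempty ∧ ∀ z ∈ Set.Ioo a b, (blk z).Finite ∧ blk z ⊆ Set.Ioo a b

lemma cell_infinite {a b : α} (h : cell a b) : (Set.Ioo a b).Infinite := by
  obtain ⟨z, hz⟩ := h.1
  have hnfb : ¬ fb z a := fun hfb => lt_irrefl a ((h.2 z hz).2 hfb).1
  have hinf : (Set.Icc a z).Infinite :=
    not_fb_infinite (le_of_lt hz.1) (fun h' => hnfb (fb_symm h'))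
  refine Set.Infinite.mono ?_ (hinf.diff (Set.finite_singleton a))
  rintro w ⟨⟨hw1, hw2⟩, hw3⟩
  have : a ≠ w := fun he => hw3 (by simp [he])
  exact ⟨lt_of_le_of_ne hw1 this, lt_of_le_of_lt hw2 hz.2⟩

lemma cell_two_blocks {a b : α} (h : cell a b) :
    ∃ p q, p ∈ Set.Ioo a b ∧ q ∈ Set.Ioo a b ∧ p < q ∧ ¬ fb p q := by
  obtain ⟨z, hz⟩ := h.1
  have hinf := cell_infinite h
  obtain ⟨q, hq⟩ := (hinf.diff (h.2 z hz).1).nonempty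
  have hqIoo : q ∈ Set.Ioo a b := hq.1
  have hnfb : ¬ fb z q := hq.2
  have hne : z ≠ q := fun he => hnfb (he ▸ fb_refl z)
  rcases lt_or_gt_of_ne hne with hlt | hlt
  · exact ⟨z, q, hz, hqIoo, hlt, hnfb⟩
  · exact ⟨q, z, hqIoo, hz, hlt, fun hfb => hnfb (fb_symm hfb)⟩

lemma gap_cell {p q : α} (hpq : p < q) (hnfb : ¬ fb p q)
    (hfin : ∀ z ∈ Set.Icc p q, (blk z).Finite) :
    ∃ u v, cell u v ∧ Set.Ioo u v ⊆ Set.Ioo p q := by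
  have hple := le_of_lt hpq
  have hBp : (blk p).Finite := hfin p ⟨le_refl p, hple⟩
  have hBq : (blk q).Finite := hfin q ⟨hple, le_refl q⟩
  obtain ⟨u, huB, humax⟩ := hBp.exists_maximal_wrt id _ ⟨p, self_mem_blk p⟩
  obtain ⟨v, hvB, hvmin⟩ := hBq.exists_minimal_wrt id _ ⟨q, self_mem_blk q⟩
  have hu_max : ∀ w ∈ blk p, w ≤ u := by
    intro w hw
    by_contra hc
    push_neg at hc
    have heq := humax w hw (le_of_lt hc)
    simp only [id_eq] at heq
    exact lt_irrefl w (heq ▸ hc)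
  have hv_min : ∀ w ∈ blk q, v ≤ w := by
    intro w hw
    by_contra hc
    push_neg at hc
    have heq := hvmin w hw (le_of_lt hc)
    simp only [id_eq] at heq
    exact lt_irrefl w (heq ▸ hc)
  have hfbpu : fb p u := huB
  have hpu : p ≤ u := hu_max p (self_mem_blk p)
  have hfbqv : fb q v := hvB
  have hvq : v ≤ q := hv_min q (self_mem_blk q)
  have huv : u < v := by
    by_contra hc
    push_neg at hc  -- v ≤ u
    rcases le_or_gt q u with h1 | h1
    · exact hnfb (fb_of_mem_Icc hfbpu hpu ⟨hple, h1⟩)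
    · have h2 : fb v u := fb_of_mem_Icc (fb_symm hfbqv) hvq ⟨hc, le_of_lt h1⟩
      exact hnfb (fb_trans hfbpu (fb_trans (fb_symm h2) (fb_symm hfbqv)))
  have hnfbuv : ¬ fb u v := fun hfb =>
    hnfb (fb_trans (fb_trans hfbpu hfb) (fb_symm hfbqv))
  have hIoo_sub : Set.Ioo u v ⊆ Set.Ioo p q := fun z hz =>
    ⟨lt_of_le_of_lt hpu hz.1, lt_of_lt_of_le hz.2 hvq⟩
  have hne : (Set.Ioo u v).Nonempty := by
    have hinf := not_fb_infinite (le_of_lt huv) hnfbuv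
    obtain ⟨w, hw⟩ := (hinf.diff ((Set.finite_singleton v).insert u)).nonempty
    have hwu : w ≠ u := fun he => hw.2 (by simp [he])
    have hwv : w ≠ v := fun he => hw.2 (by simp [he])
    exact ⟨w, lt_of_le_of_ne hw.1.1 (Ne.symm hwu), lt_of_le_of_ne hw.1.2 hwv⟩
  refine ⟨u, v, ⟨hne, ?_⟩, hIoo_sub⟩
  intro z hz
  have hzpq : z ∈ Set.Icc p q := ⟨le_of_lt (lt_of_le_of_lt hpu hz.1), le_of_lt (lt_of_lt_of_le hz.2 hvq)⟩
  refine ⟨hfin z hzpq, ?_⟩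
  intro w hw
  have hfbzw : fb z w := hw
  have hnpz : ¬ fb p z := fun hfb => absurd (hu_max z hfb) (not_le_of_gt hz.1)
  have hnqz : ¬ fb q z := fun hfb => absurd (hv_min z hfb) (not_le_of_gt hz.2)
  constructor
  · by_contra hc
    push_neg at hc  -- w ≤ u
    have h1 : fb w z := fb_symm hfbzw
    have h2 : fb w u := fb_of_mem_Icc h1 (le_trans hc (le_of_lt hz.1)) ⟨hc, le_of_lt hz.1⟩
    exact hnpz (fb_trans (fb_trans hfbpu (fb_symm h2)) h1)
  · by_contra hc
    push_neg at hc  -- v ≤ w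
    have h2 : fb z v := fb_of_mem_Icc hfbzw (le_trans (le_of_lt hz.2) hc) ⟨le_of_lt hz.2, hc⟩
    exact hnqz (fb_trans hfbqv (fb_symm h2))

/-- homogeneous cell: all subcells have the same cardinality -/
def homog (a b : α) : Prop :=
  cell a b ∧ ∀ u v, cell u v → Set.Ioo u v ⊆ Set.Ioo a b →
    Cardinal.mk (Set.Ioo u v) = Cardinal.mk (Set.Ioo a b)

lemma homog_exists {a b : α} (h : cell a b) :
    ∃ u v, homog u v ∧ Set.Ioo u v ⊆ Set.Ioo a b := by
  set S : Set Cardinal := {c | ∃ u v, cell u v ∧ Set.Ioo u v ⊆ Set.Ioo a b ∧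
    Cardinal.mk (Set.Ioo u v) = c} with hS
  have hne : S.Nonempty := ⟨Cardinal.mk (Set.Ioo a b), a, b, h, subset_rfl, rfl⟩
  obtain ⟨c0, hc0S, hc0min⟩ := Cardinal.lt_wf.has_min S hne
  obtain ⟨u, v, hcuv, hsub, hcard⟩ := hc0S
  refine ⟨u, v, ⟨hcuv, ?_⟩, hsub⟩
  intro u' v' hc' hsub'
  have hmem : Cardinal.mk (Set.Ioo u' v') ∈ S :=
    ⟨u', v', hc', subset_trans hsub' hsub, rfl⟩
  have h1 : ¬ Cardinal.mk (Set.Ioo u' v') < c0 := hc0min _ hmem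
  have h2 : Cardinal.mk (Set.Ioo u' v') ≤ Cardinal.mk (Set.Ioo u v) :=
    Cardinal.mk_le_mk_of_subset hsub'
  refine le_antisymm h2 ?_
  rw [hcard]
  exact not_lt.mp h1

/-- system of distinct representatives -/
lemma sdr {X ι : Type u} (S : ι → Set X)
    (hS : ∀ i, Cardinal.mk ι ≤ Cardinal.mk (S i)) :
    ∃ f : ι → X, Function.Injective f ∧ ∀ i, f i ∈ S i := by
  classical
  set κ := Cardinal.mk ι with hκ
  obtain ⟨e⟩ : Nonempty (ι ≃ κ.ord.ToType) := by
    rw [← Cardinal.eq, Cardinal.mk_ord_toType]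
  have hsmall : ∀ b : κ.ord.ToType, Cardinal.mk {b' // b' < b} < κ := by
    intro b
    have h1 := @Ordinal.card_typein κ.ord.ToType ((· < ·) : κ.ord.ToType → κ.ord.ToType → Prop) isWellOrder_lt b
    have h2 := @Ordinal.typein_lt_type κ.ord.ToType ((· < ·) : κ.ord.ToType → κ.ord.ToType → Prop) isWellOrder_lt b
    rw [Ordinal.type_toType] at h2
    rw [← h1]
    exact Cardinal.lt_ord.mp h2
  have hne : ∀ (b : κ.ord.ToType) (ih : ∀ b', b' < b → X),
      (S (e.symm b) \ Set.range (fun p : {b' // b' < b} => ih p.1 p.2)).Nonempty := by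
    intro b ih
    rw [Set.nonempty_iff_ne_empty]
    intro hemp
    rw [Set.diff_eq_empty] at hemp
    have hR : Cardinal.mk (Set.range (fun p : {b' // b' < b} => ih p.1 p.2)) < κ :=
      lt_of_le_of_lt Cardinal.mk_range_le (hsmall b)
    exact absurd (lt_of_le_of_lt (le_trans (hS (e.symm b))
      (Cardinal.mk_le_mk_of_subset hemp)) hR) (lt_irrefl κ)
  let F : ∀ b : κ.ord.ToType, (∀ b', b' < b → X) → X := fun b ih => (hne b ih).some
  let g : κ.ord.ToType → X := IsWellFounded.fix (· < ·) F
  have geq : ∀ b, g b = F b (fun b' _ => g b') := fun b =>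
    IsWellFounded.fix_eq (· < ·) F b
  have gmem : ∀ b, g b ∈ S (e.symm b) \ Set.range (fun p : {b' // b' < b} => g p.1) := by
    intro b
    rw [geq b]
    exact (hne b (fun b' _ => g b')).some_mem
  have ginj : Function.Injective g := by
    intro b1 b2 hgb
    by_contra hne12
    rcases lt_or_gt_of_ne hne12 with hlt | hlt
    · exact (gmem b2).2 ⟨⟨b1, hlt⟩, hgb⟩
    · exact (gmem b1).2 ⟨⟨b2, hlt⟩, hgb.symm⟩
  refine ⟨fun i => g (e i), fun i j h => e.injective (ginj h), fun i => ?_⟩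
  have := (gmem (e i)).1
  rwa [Equiv.symm_apply_apply] at this

lemma reps_card {a b u v : α} (hab : homog a b) (huv : cell u v)
    (hsub : Set.Ioo u v ⊆ Set.Ioo a b) :
    Cardinal.mk (Set.Ioo a b) ≤ Cardinal.mk {z ∈ Set.Ioo u v | rep z = z} := by
  classical
  set T := {z ∈ Set.Ioo u v | rep z = z} with hT
  have hcover : Set.Ioo u v ⊆ ⋃ t : T, blk (t : α) := by
    intro z hz
    have h1 : rep z ∈ blk z := rep_mem_blk z
    have h2 : rep z ∈ Set.Ioo u v := (huv.2 z hz).2 h1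
    exact Set.mem_iUnion.mpr ⟨⟨rep z, h2, rep_idem z⟩, (rep_fb z : fb (rep z) z)⟩
  have hcardIoo : Cardinal.mk (Set.Ioo u v) = Cardinal.mk (Set.Ioo a b) := hab.2 u v huv hsub
  by_contra hc
  push_neg at hc
  rcases finite_or_infinite T with hfin | hinf
  · have hUfin : (⋃ t : T, blk (t : α)).Finite :=
      Set.finite_iUnion (fun t => (huv.2 t.1 t.2.1).1)
    exact (cell_infinite huv) (hUfin.subset hcover)
  · have hTa : Cardinal.aleph0 ≤ Cardinal.mk T := Cardinal.aleph0_le_mk T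
    have hble : ∀ t : T, Cardinal.mk (blk (t : α)) ≤ Cardinal.aleph0 := by
      intro t
      have hf : (blk (t : α)).Finite := (huv.2 t.1 t.2.1).1
      haveI := hf.to_subtype
      exact Cardinal.mk_le_aleph0
    have hUle : Cardinal.mk (⋃ t : T, blk (t : α)) ≤ Cardinal.mk T * Cardinal.aleph0 := by
      refine le_trans (Cardinal.mk_iUnion_le _) ?_
      exact mul_le_mul' le_rfl (ciSup_le' hble)
    have heq : Cardinal.mk T * Cardinal.aleph0 = Cardinal.mk T := by
      rw [Cardinal.mul_eq_max hTa le_rfl]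
      exact max_eq_left hTa
    have : Cardinal.mk (Set.Ioo a b) ≤ Cardinal.mk T := by
      calc Cardinal.mk (Set.Ioo a b) = Cardinal.mk (Set.Ioo u v) := hcardIoo.symm
      _ ≤ Cardinal.mk (⋃ t : T, blk (t : α)) := Cardinal.mk_le_mk_of_subset hcover
      _ ≤ Cardinal.mk T := heq ▸ hUle
    exact absurd this (not_le_of_gt hc)

/-- requirements of a cell -/
def Req (n : ℕ) (a b : α) : Type _ :=
  {r : (α × α) × Fin (n + 1) // r.1.1 ∈ Set.Ioo a b ∧ r.1.2 ∈ Set.Ioo a b ∧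
    r.1.1 < r.1.2 ∧ ¬ fb r.1.1 r.1.2}

lemma cell_pick {a b : α} (hab : homog a b) :
    ∃ f : Req n a b → α, Function.Injective f ∧ ∀ r : Req n a b, rep (f r) = f r ∧
      f r ∈ Set.Ioo r.1.1.1 r.1.1.2 ∧ f r ∈ Set.Ioo a b := by
  classical
  have hsc : ∀ r : Req n a b, ∃ u v, cell u v ∧ Set.Ioo u v ⊆ Set.Ioo r.1.1.1 r.1.1.2 := by
    intro r
    obtain ⟨hp, hq, hlt, hnfb⟩ := r.2
    apply gap_cell hlt hnfb
    intro z hz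
    have hzIoo : z ∈ Set.Ioo a b := ⟨lt_of_lt_of_le hp.1 hz.1, lt_of_le_of_lt hz.2 hq.2⟩
    exact (hab.1.2 z hzIoo).1
  choose U V hUV hUVsub using hsc
  have hIoo_sub : ∀ r : Req n a b, Set.Ioo r.1.1.1 r.1.1.2 ⊆ Set.Ioo a b := by
    intro r z hz
    exact ⟨lt_trans r.2.1.1 hz.1, lt_trans hz.2 r.2.2.1.2⟩
  set S : Req n a b → Set α := fun r => {z ∈ Set.Ioo (U r) (V r) | rep z = z} with hS
  have hinfab : Cardinal.aleph0 ≤ Cardinal.mk (Set.Ioo a b) := by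
    haveI := (cell_infinite hab.1).to_subtype
    exact Cardinal.aleph0_le_mk _
  have hReqle : Cardinal.mk (Req n a b) ≤ Cardinal.mk (Set.Ioo a b) := by
    have hinj : Function.Injective (fun r : Req n a b =>
        ((⟨r.1.1.1, r.2.1⟩ : Set.Ioo a b), (⟨r.1.1.2, r.2.2.1⟩ : Set.Ioo a b), r.1.2)) := by
      intro r r' h
      apply Subtype.ext
      have h1 := congrArg (fun x => (x.1 : α)) h
      have h2 := congrArg (fun x => (x.2.1 : α)) h
      have h3 := congrArg (fun x => x.2.2) h
      simp only at h1 h2 h3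
      exact Prod.ext (Prod.ext h1 h2) h3
    refine le_trans (Cardinal.mk_le_of_injective hinj) ?_
    have : Cardinal.mk ((Set.Ioo a b) × (Set.Ioo a b) × Fin (n + 1)) =
        Cardinal.mk (Set.Ioo a b) * (Cardinal.mk (Set.Ioo a b) * (n + 1)) := by
      simp [Cardinal.mk_prod, Cardinal.mk_fin]
    rw [this]
    calc Cardinal.mk (Set.Ioo a b) * (Cardinal.mk (Set.Ioo a b) * (n + 1))
        ≤ Cardinal.mk (Set.Ioo a b) * (Cardinal.mk (Set.Ioo a b) * Cardinal.mk (Set.Ioo a b)) := by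
          refine mul_le_mul' le_rfl (mul_le_mul' le_rfl ?_)
          have hcst : ((n : Cardinal) + 1) = ((n + 1 : ℕ) : Cardinal) := by push_cast; ring
          rw [hcst]
          exact le_trans (le_of_lt (Cardinal.nat_lt_aleph0 (n + 1))) hinfab
      _ = Cardinal.mk (Set.Ioo a b) := by
          rw [Cardinal.mul_eq_self hinfab, Cardinal.mul_eq_self hinfab]
  have hfeas : ∀ r, Cardinal.mk (Req n a b) ≤ Cardinal.mk (S r) := by
    intro r
    have hsub2 : Set.Ioo (U r) (V r) ⊆ Set.Ioo a b :=
      subset_trans (hUVsub r) (hIoo_sub r)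
    exact le_trans hReqle (reps_card hab (hUV r) hsub2)
  obtain ⟨f, hfinj, hfmem⟩ := sdr S hfeas
  refine ⟨f, hfinj, fun r => ?_⟩
  obtain ⟨hmem, hrep⟩ := hfmem r
  exact ⟨hrep, hUVsub r hmem, (hIoo_sub r) (hUVsub r hmem)⟩

lemma exists_offset :
    ∃ Off : α → ℤ, ∀ p q : α, p < q → ¬ fb p q →
      (∀ z ∈ Set.Icc p q, (blk z).Finite) → ∀ i : Fin (n + 1),
        ∃ z ∈ Set.Icc p q, rep z = z ∧ Off z = ((i : ℕ) : ℤ) := by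
  classical
  set Fam : Set (Set (α × α)) := {F | (∀ C ∈ F, homog C.1 C.2) ∧
    (∀ C ∈ F, ∀ C' ∈ F, C ≠ C' → Disjoint (Set.Ioo C.1 C.2) (Set.Ioo C'.1 C'.2))} with hFam
  have hchain : ∀ c ⊆ Fam, IsChain (fun x1 x2 => x1 ⊆ x2) c → ∃ ub ∈ Fam, ∀ s ∈ c, s ⊆ ub := by
    intro c hc hchain
    refine ⟨⋃₀ c, ⟨?_, ?_⟩, fun s hs => Set.subset_sUnion_of_mem hs⟩
    · rintro C ⟨F, hF, hCF⟩
      exact (hc hF).1 C hCF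
    · rintro C ⟨F, hF, hCF⟩ C' ⟨F', hF', hCF'⟩ hne
      rcases hchain.total hF hF' with h | h
      · exact (hc hF').2 C (h hCF) C' hCF' hne
      · exact (hc hF).2 C hCF C' (h hCF') hne
  obtain ⟨M, hM⟩ := zorn_subset Fam hchain
  have hMfam : M ∈ Fam := hM.1
  have hpickAll : ∀ C : {C : α × α // C ∈ M}, ∃ f : Req n C.1.1 C.1.2 → α,
      Function.Injective f ∧ ∀ r, rep (f r) = f r ∧ f r ∈ Set.Ioo r.1.1.1 r.1.1.2 ∧
        f r ∈ Set.Ioo C.1.1 C.1.2 :=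
    fun C => cell_pick n (hMfam.1 C.1 C.2)
  choose f finj fspec using hpickAll
  have huniq : ∀ (C1 C2 : {C : α × α // C ∈ M}) (r1 : Req n C1.1.1 C1.1.2)
      (r2 : Req n C2.1.1 C2.1.2), f C1 r1 = f C2 r2 → r1.1.2 = r2.1.2 := by
    intro C1 C2 r1 r2 heq
    have hz1 : f C1 r1 ∈ Set.Ioo C1.1.1 C1.1.2 := (fspec C1 r1).2.2
    have hz2 : f C1 r1 ∈ Set.Ioo C2.1.1 C2.1.2 := heq ▸ (fspec C2 r2).2.2
    have hCeq : C1 = C2 := by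
      refine Subtype.ext ?_
      by_contra hne
      exact Set.disjoint_left.mp (hMfam.2 C1.1 C1.2 C2.1 C2.2 hne) hz1 hz2
    subst hCeq
    have : r1 = r2 := finj C1 heq
    rw [this]
  set P : α → Prop := fun z => ∃ (C : {C : α × α // C ∈ M}) (r : Req n C.1.1 C.1.2),
    f C r = z with hP
  refine ⟨fun z => if h : P z then ((h.choose_spec.choose.1.2 : ℕ) : ℤ) else 0, ?_⟩
  intro p q hpq hnfb hfin i
  obtain ⟨u, v, hcuv, hsubpq⟩ := gap_cell hpq hnfb hfin
  by_cases hex : ∃ C ∈ M, ¬ Disjoint (Set.Ioo C.1 C.2) (Set.Ioo u v)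
  · obtain ⟨C, hCM, hndis⟩ := hex
    obtain ⟨w0, hw0⟩ := Set.not_disjoint_iff_nonempty_inter.mp hndis
    have hWeq : Set.Ioo C.1 C.2 ∩ Set.Ioo u v = Set.Ioo (C.1 ⊔ u) (C.2 ⊓ v) :=
      Set.Ioo_inter_Ioo
    have hcellW : cell (C.1 ⊔ u) (C.2 ⊓ v) := by
      constructor
      · rw [← hWeq]; exact ⟨w0, hw0⟩
      · intro z hz
        rw [← hWeq] at hz
        refine ⟨((hMfam.1 C hCM).1.2 z hz.1).1, ?_⟩
        rw [← hWeq]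
        exact Set.subset_inter ((hMfam.1 C hCM).1.2 z hz.1).2 (hcuv.2 z hz.2).2
    obtain ⟨p', q', hp'W, hq'W, hp'q', hnfb'⟩ := cell_two_blocks hcellW
    have hp'both : p' ∈ Set.Ioo C.1 C.2 ∩ Set.Ioo u v := by rw [hWeq]; exact hp'W
    have hq'both : q' ∈ Set.Ioo C.1 C.2 ∩ Set.Ioo u v := by rw [hWeq]; exact hq'W
    set r : Req n C.1 C.2 := ⟨((p', q'), i), hp'both.1, hq'both.1, hp'q', hnfb'⟩ with hr
    have hzspec := fspec ⟨C, hCM⟩ r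
    set z := f ⟨C, hCM⟩ r with hz
    have hzIoo : z ∈ Set.Ioo p' q' := hzspec.2.1
    have hzW : z ∈ Set.Ioo u v :=
      ⟨lt_trans hp'both.2.1 hzIoo.1, lt_trans hzIoo.2 hq'both.2.2⟩
    have hzIcc : z ∈ Set.Icc p q := ⟨le_of_lt (hsubpq hzW).1, le_of_lt (hsubpq hzW).2⟩
    refine ⟨z, hzIcc, hzspec.1, ?_⟩
    have hPz : P z := ⟨⟨C, hCM⟩, r, rfl⟩
    beta_reduce
    rw [dif_pos hPz]
    have hcol : hPz.choose_spec.choose.1.2 = r.1.2 :=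
      huniq _ _ _ _ (hPz.choose_spec.choose_spec.trans hz)
    rw [hcol]
  · push_neg at hex
    exfalso
    obtain ⟨u0, v0, hhom0, hsub0⟩ := homog_exists hcuv
    have hnotin : (u0, v0) ∉ M := by
      intro hin
      obtain ⟨w, hw⟩ := hhom0.1.1
      exact Set.disjoint_left.mp (hex (u0, v0) hin) hw (hsub0 hw)
    have hbig : insert (u0, v0) M ∈ Fam := by
      constructor
      · intro C hC
        rcases Set.mem_insert_iff.mp hC with rfl | hC
        · exact hhom0
        · exact hMfam.1 C hC
      · intro C hC C' hC' hne
        rcases Set.mem_insert_iff.mp hC with rfl | hC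
        · rcases Set.mem_insert_iff.mp hC' with rfl | hC'
          · exact absurd rfl hne
          · exact Disjoint.mono_left hsub0 ((hex C' hC').symm)
        · rcases Set.mem_insert_iff.mp hC' with rfl | hC'
          · exact Disjoint.mono_right hsub0 (hex C hC)
          · exact hMfam.2 C hC C' hC' hne
    have hsub' := hM.2 hbig (Set.subset_insert _ _)
    exact hnotin (hsub' (Set.mem_insert _ _))

theorem main : ∃ c : α → Fin (n + 1), ∀ x y : α, x < y → c x = c y →
    ∀ i : Fin (n + 1), ∃ z : α, x ≤ z ∧ z ≤ y ∧ c z = i := by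
  classical
  obtain ⟨Off, hOff⟩ := exists_offset (α := α) n
  refine ⟨col n Off, ?_⟩
  intro x y hxy hcxy i
  by_cases hfb : fb x y
  · obtain ⟨z, hz, hcz⟩ := case_same_block n Off hxy hfb hcxy i
    exact ⟨z, hz.1, hz.2, hcz⟩
  by_cases hup : {z | fb x z ∧ x ≤ z}.Infinite
  · obtain ⟨z, hxz, hfbz, hcz⟩ := case_up_inf n Off hup i
    refine ⟨z, hxz, ?_, hcz⟩
    by_contra hc
    push_neg at hc
    exact hfb (fb_of_mem_Icc hfbz hxz ⟨le_of_lt hxy, le_of_lt hc⟩)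
  by_cases hdown : {z | fb y z ∧ z ≤ y}.Infinite
  · obtain ⟨z, hzy, hfbz, hcz⟩ := case_down_inf n Off hdown i
    refine ⟨z, ?_, hzy, hcz⟩
    by_contra hc
    push_neg at hc
    have h1 : fb z x := fb_of_mem_Icc (fb_symm hfbz) hzy ⟨le_of_lt hc, le_of_lt hxy⟩
    exact hfb (fb_trans (fb_symm h1) (fb_symm hfbz))
  -- both block-halves finite
  have hSx : {z | fb x z ∧ x ≤ z}.Finite := Set.not_infinite.mp hup
  have hSy : {z | fb y z ∧ z ≤ y}.Finite := Set.not_infinite.mp hdown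
  obtain ⟨m, hm_mem, hm_max0⟩ :=
    hSx.exists_maximal_wrt id _ ⟨x, fb_refl x, le_refl x⟩
  obtain ⟨m', hm'_mem, hm'_min0⟩ :=
    hSy.exists_minimal_wrt id _ ⟨y, fb_refl y, le_refl y⟩
  have hm_max : ∀ w, fb x w → x ≤ w → w ≤ m := by
    intro w hw1 hw2
    by_contra hc
    push_neg at hc
    have heq := hm_max0 w ⟨hw1, hw2⟩ (le_of_lt hc)
    simp only [id_eq] at heq
    exact lt_irrefl w (heq ▸ hc)
  have hm'_min : ∀ w, fb y w → w ≤ y → m' ≤ w := by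
    intro w hw1 hw2
    by_contra hc
    push_neg at hc
    have heq := hm'_min0 w ⟨hw1, hw2⟩ (le_of_lt hc)
    simp only [id_eq] at heq
    exact lt_irrefl w (heq ▸ hc)
  have hfbxm : fb x m := hm_mem.1
  have hxm : x ≤ m := hm_mem.2
  have hfbym' : fb y m' := hm'_mem.1
  have hm'y : m' ≤ y := hm'_mem.2
  have hmm' : m < m' := by
    by_contra hc
    push_neg at hc  -- m' ≤ m
    rcases le_or_gt y m with h1 | h1
    · exact hfb (fb_of_mem_Icc hfbxm hxm ⟨le_of_lt hxy, h1⟩)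
    · have h2 : fb m' m := fb_of_mem_Icc (fb_symm hfbym') hm'y ⟨hc, le_of_lt h1⟩
      exact hfb (fb_trans hfbxm (fb_trans (fb_symm h2) (fb_symm hfbym')))
  have hblk : ∀ z ∈ Set.Ioo m m', ¬ fb x z ∧ ¬ fb y z := by
    intro z hz
    constructor
    · intro hfbxz
      exact absurd (hm_max z hfbxz (le_trans hxm (le_of_lt hz.1))) (not_le_of_gt hz.1)
    · intro hfbyz
      exact absurd (hm'_min z hfbyz (le_trans (le_of_lt hz.2) hm'y)) (not_le_of_gt hz.2)
  have hblkcont : ∀ z ∈ Set.Ioo m m', blk z ⊆ Set.Ioo m m' := by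
    intro z hz w hw
    constructor
    · by_contra hc
      push_neg at hc  -- w ≤ m
      have h2 : fb w m := fb_of_mem_Icc (fb_symm hw) (le_trans hc (le_of_lt hz.1))
        ⟨hc, le_of_lt hz.1⟩
      exact (hblk z hz).1 (fb_trans hfbxm (fb_symm (fb_trans hw h2)))
    · by_contra hc
      push_neg at hc  -- m' ≤ w
      have h2 : fb z m' := fb_of_mem_Icc hw (le_trans (le_of_lt hz.2) hc)
        ⟨le_of_lt hz.2, hc⟩
      exact (hblk z hz).2 (fb_trans hfbym' (fb_symm h2))
  have hIoo_sub : Set.Ioo m m' ⊆ Set.Icc x y := fun z hz =>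
    ⟨le_trans hxm (le_of_lt hz.1), le_trans (le_of_lt hz.2) hm'y⟩
  by_cases hbig : ∃ z0 ∈ Set.Ioo m m', ¬ (blk z0).Finite
  · obtain ⟨z0, hz0, hinfblk⟩ := hbig
    have hsplit : {z | fb z0 z ∧ z0 ≤ z}.Infinite ∨ {z | fb z0 z ∧ z ≤ z0}.Infinite := by
      by_contra hcc
      push_neg at hcc
      have hsub : blk z0 ⊆ {z | fb z0 z ∧ z0 ≤ z} ∪ {z | fb z0 z ∧ z ≤ z0} := by
        intro w hw
        rcases le_total z0 w with h | h
        · exact Or.inl ⟨hw, h⟩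
        · exact Or.inr ⟨hw, h⟩
      exact hinfblk ((hcc.1.union hcc.2).subset hsub)
    rcases hsplit with hupz | hdownz
    · obtain ⟨z, _, hfbz, hcz⟩ := case_up_inf n Off hupz i
      have hzIoo : z ∈ Set.Ioo m m' := hblkcont z0 hz0 hfbz
      exact ⟨z, (hIoo_sub hzIoo).1, (hIoo_sub hzIoo).2, hcz⟩
    · obtain ⟨z, _, hfbz, hcz⟩ := case_down_inf n Off hdownz i
      have hzIoo : z ∈ Set.Ioo m m' := hblkcont z0 hz0 hfbz
      exact ⟨z, (hIoo_sub hzIoo).1, (hIoo_sub hzIoo).2, hcz⟩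
  · push_neg at hbig
    have hnfbmm' : ¬ fb m m' := fun h =>
      hfb (fb_trans hfbxm (fb_trans h (fb_symm hfbym')))
    have hIoo_inf : (Set.Ioo m m').Infinite := by
      have hinf := not_fb_infinite (le_of_lt hmm') hnfbmm'
      refine Set.Infinite.mono ?_ (hinf.diff ((Set.finite_singleton m').insert m))
      rintro w ⟨⟨hw1, hw2⟩, hw3⟩
      have h1 : w ≠ m := fun he => hw3 (by simp [he])
      have h2 : w ≠ m' := fun he => hw3 (by simp [he])
      exact ⟨lt_of_le_of_ne hw1 (Ne.symm h1), lt_of_le_of_ne hw2 h2⟩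
    obtain ⟨p0, hp0⟩ := hIoo_inf.nonempty
    obtain ⟨q0, hq0⟩ := (hIoo_inf.diff (hbig p0 hp0)).nonempty
    have hnfb0 : ¬ fb p0 q0 := hq0.2
    have hq0Ioo : q0 ∈ Set.Ioo m m' := hq0.1
    have hne0 : p0 ≠ q0 := fun he => hnfb0 (he ▸ fb_refl p0)
    have key : ∀ p q : α, p ∈ Set.Ioo m m' → q ∈ Set.Ioo m m' → p < q → ¬ fb p q →
        ∃ z : α, x ≤ z ∧ z ≤ y ∧ col n Off z = i := by
      intro p q hpI hqI hlt hnfb'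
      have hfin' : ∀ z ∈ Set.Icc p q, (blk z).Finite := by
        intro z hz
        exact hbig z ⟨lt_of_lt_of_le hpI.1 hz.1, lt_of_le_of_lt hz.2 hqI.2⟩
      obtain ⟨z, hzIcc, hzrep, hzOff⟩ := hOff p q hlt hnfb' hfin' i
      have hzIoo : z ∈ Set.Ioo m m' :=
        ⟨lt_of_lt_of_le hpI.1 hzIcc.1, lt_of_le_of_lt hzIcc.2 hqI.2⟩
      exact ⟨z, (hIoo_sub hzIoo).1, (hIoo_sub hzIoo).2, col_fixed n Off hzrep i hzOff⟩
    rcases lt_or_gt_of_ne hne0 with hlt | hlt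
    · exact key p0 q0 hp0 hq0Ioo hlt hnfb0
    · exact key q0 p0 hq0Ioo hp0 hlt (fun h => hnfb0 (fb_symm h))

end RainbowCol

theorem colouring_exists {α : Type*} [LinearOrder α] (k : ℕ) (hk : 1 ≤ k) :
    ∃ c : α → Fin k, ∀ x y : α, x < y → c x = c y →
      ∀ i : Fin k, ∃ z : α, x ≤ z ∧ z ≤ y ∧ c z = i := by
  obtain ⟨n, rfl⟩ : ∃ n, k = n + 1 := ⟨k - 1, by omega⟩
  exact RainbowCol.main n
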